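/- Any product of n − 1 rooted directed graphs on n vertices (each with all self-loops) is non-split: if G₁, …, G_{n−1} each contain a rooted spanning tree, then in G₁ ∘ G₂ ∘ ⋯ ∘ G_{n−1}, any two vertices have a common in-neighbor. -/

import Mathlib

/-- Product of two directed graphs (as relations). -/
def graphProd {n : ℕ} (G H : Fin n → Fin n → Prop) : Fin n → Fin n → Prop :=
  fun i j => ∃ k, G i k ∧ H k j

/-- Product of a list of graphs (identity relation for the empty list). -/
def listProd {n : ℕ} (l : List (Fin n → Fin n → Prop)) : Fin n → Fin n → Prop :=
  l.foldr graphProd (fun i j => i = j)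

/-- A graph is rooted if some vertex has a directed path to every vertex. -/
def Rooted {n : ℕ} (G : Fin n → Fin n → Prop) : Prop :=
  ∃ r, ∀ v, Relation.ReflTransGen G r v

open Classical in
/-- Set of in-neighbors of `i` under the product of `l`. -/
noncomputable def inSet {n : ℕ} (l : List (Fin n → Fin n → Prop)) (i : Fin n) :
    Finset (Fin n) :=
  Finset.univ.filter (fun k => listProd l k i)

lemma mem_inSet {n : ℕ} {l : List (Fin n → Fin n → Prop)} {i k : Fin n} :
    k ∈ inSet l i ↔ listProd l k i := by
  classical
  simp [inSet]

lemma mem_inSet_cons {n : ℕ} {G : Fin n → Fin n → Prop}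
    {l : List (Fin n → Fin n → Prop)} {i k : Fin n} :
    k ∈ inSet (G :: l) i ↔ ∃ v, G k v ∧ v ∈ inSet l i := by
  simp only [mem_inSet]
  rfl

lemma self_mem_inSet {n : ℕ} {l : List (Fin n → Fin n → Prop)}
    (hself : ∀ G ∈ l, ∀ i, G i i) (i : Fin n) : i ∈ inSet l i := by
  induction l with
  | nil => simp [mem_inSet, listProd]
  | cons G l ih =>
    rw [mem_inSet_cons]
    exact ⟨i, hself G (by simp) i, ih (fun H hH => hself H (by simp [hH]))⟩

lemma inSet_subset_cons {n : ℕ} {G : Fin n → Fin n → Prop}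
    (hG : ∀ i, G i i) {l : List (Fin n → Fin n → Prop)} {i : Fin n} :
    inSet l i ⊆ inSet (G :: l) i := by
  intro k hk
  rw [mem_inSet_cons]
  exact ⟨k, hG k, hk⟩

/-- If a path goes from outside `S` into `S`, some edge crosses into `S`. -/
lemma cross {n : ℕ} {G : Fin n → Fin n → Prop} {S : Finset (Fin n)} {r v : Fin n}
    (h : Relation.ReflTransGen G r v) (hr : r ∉ S) (hv : v ∈ S) :
    ∃ a b, a ∉ S ∧ b ∈ S ∧ G a b := by
  induction h with
  | refl => exact absurd hv hr
  | @tail b c hrb hbc ih =>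
    by_cases hb : b ∈ S
    · exact ih hb
    · exact ⟨b, c, hb, hv, hbc⟩

/-- A rooted graph strictly grows any nonempty set avoiding the root. -/
lemma grow {n : ℕ} {G : Fin n → Fin n → Prop}
    {l : List (Fin n → Fin n → Prop)} {i r : Fin n}
    (hroot : ∀ v, Relation.ReflTransGen G r v)
    (hr : r ∉ inSet l i) (hne : (inSet l i).Nonempty) :
    ∃ x, x ∉ inSet l i ∧ x ∈ inSet (G :: l) i := by
  obtain ⟨v, hv⟩ := hne
  obtain ⟨a, b, ha, hb, hab⟩ := cross (hroot v) hr hv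
  exact ⟨a, ha, mem_inSet_cons.mpr ⟨b, hab, hb⟩⟩

lemma main_lemma {n : ℕ} (l : List (Fin n → Fin n → Prop))
    (hself : ∀ G ∈ l, ∀ i, G i i) (hroot : ∀ G ∈ l, Rooted G) (i j : Fin n) :
    (∃ k, k ∈ inSet l i ∧ k ∈ inSet l j) ∨
      l.length + 2 ≤ (inSet l i ∪ inSet l j).card := by
  classical
  induction l with
  | nil =>
    by_cases hij : i = j
    · subst hij
      exact Or.inl ⟨i, self_mem_inSet (by simp) i, self_mem_inSet (by simp) i⟩
    · right
      have h1 : inSet ([] : List (Fin n → Fin n → Prop)) i = {i} := by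
        ext k; simp [mem_inSet, listProd]
      have h2 : inSet ([] : List (Fin n → Fin n → Prop)) j = {j} := by
        ext k; simp [mem_inSet, listProd]
      rw [h1, h2, ← Finset.insert_eq, Finset.card_insert_of_notMem (by simp [hij])]
      simp
  | cons G l ih =>
    have hselfG : ∀ v, G v v := fun v => hself G (by simp) v
    have hself' : ∀ H ∈ l, ∀ i, H i i := fun H hH => hself H (by simp [hH])
    have hroot' : ∀ H ∈ l, Rooted H := fun H hH => hroot H (by simp [hH])
    by_cases hmeet : ∃ k, k ∈ inSet (G :: l) i ∧ k ∈ inSet (G :: l) j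
    · exact Or.inl hmeet
    · right
      push_neg at hmeet
      have hdisj : Disjoint (inSet (G :: l) i) (inSet (G :: l) j) :=
        Finset.disjoint_left.mpr (fun k hk hk' => hmeet k hk hk')
      -- old sets are disjoint too
      rcases ih hself' hroot' with ⟨k, hki, hkj⟩ | hcard
      · exact absurd (inSet_subset_cons hselfG hkj)
          (hmeet k (inSet_subset_cons hselfG hki))
      obtain ⟨r, hr⟩ := hroot G (by simp)
      have hdisj' : Disjoint (inSet l i) (inSet l j) :=
        hdisj.mono (inSet_subset_cons hselfG) (inSet_subset_cons hselfG)
      -- r misses one of the old sets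
      have hnei : (inSet l i).Nonempty := ⟨i, self_mem_inSet hself' i⟩
      have hnej : (inSet l j).Nonempty := ⟨j, self_mem_inSet hself' j⟩
      have key : ∃ x, x ∉ inSet l i ∪ inSet l j ∧ x ∈ inSet (G :: l) i ∪ inSet (G :: l) j := by
        by_cases hri : r ∈ inSet l i
        · have hrj : r ∉ inSet l j := Finset.disjoint_left.mp hdisj' hri
          obtain ⟨x, hx1, hx2⟩ := grow hr hrj hnej
          refine ⟨x, ?_, Finset.mem_union_right _ hx2⟩
          simp only [Finset.mem_union, not_or]
          refine ⟨?_, hx1⟩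
          intro hxi
          exact hmeet x (inSet_subset_cons hselfG hxi) hx2
        · obtain ⟨x, hx1, hx2⟩ := grow hr hri hnei
          refine ⟨x, ?_, Finset.mem_union_left _ hx2⟩
          simp only [Finset.mem_union, not_or]
          refine ⟨hx1, ?_⟩
          intro hxj
          exact hmeet x hx2 (inSet_subset_cons hselfG hxj)
      obtain ⟨x, hx1, hx2⟩ := key
      have hsub : insert x (inSet l i ∪ inSet l j) ⊆ inSet (G :: l) i ∪ inSet (G :: l) j := by
        intro y hy
        rcases Finset.mem_insert.mp hy with rfl | hy
        · exact hx2
        · rcases Finset.mem_union.mp hy with hy | hy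
          · exact Finset.mem_union_left _ (inSet_subset_cons hselfG hy)
          · exact Finset.mem_union_right _ (inSet_subset_cons hselfG hy)
      calc (G :: l).length + 2 = (l.length + 2) + 1 := by simp
        _ ≤ (inSet l i ∪ inSet l j).card + 1 := by omega
        _ = (insert x (inSet l i ∪ inSet l j)).card := (Finset.card_insert_of_notMem hx1).symm
        _ ≤ _ := Finset.card_le_card hsub

theorem prod_of_rooted_is_nonsplit {n : ℕ} (hn : 1 ≤ n)
    (Gs : Fin (n - 1) → (Fin n → Fin n → Prop))
    (hself : ∀ m i, Gs m i i)
    (hrooted : ∀ m, Rooted (Gs m)) :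
    ∀ i j, ∃ k, listProd (List.ofFn Gs) k i ∧ listProd (List.ofFn Gs) k j := by
  intro i j
  have hself' : ∀ G ∈ List.ofFn Gs, ∀ i, G i i := by
    intro G hG
    obtain ⟨m, rfl⟩ := List.mem_ofFn.mp hG
    exact hself m
  have hroot' : ∀ G ∈ List.ofFn Gs, Rooted G := by
    intro G hG
    obtain ⟨m, rfl⟩ := List.mem_ofFn.mp hG
    exact hrooted m
  rcases main_lemma (List.ofFn Gs) hself' hroot' i j with ⟨k, hk1, hk2⟩ | hcard
  · exact ⟨k, mem_inSet.mp hk1, mem_inSet.mp hk2⟩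
  · exfalso
    have h1 : (inSet (List.ofFn Gs) i ∪ inSet (List.ofFn Gs) j).card ≤ n := by
      simpa using Finset.card_le_univ (inSet (List.ofFn Gs) i ∪ inSet (List.ofFn Gs) j)
    rw [List.length_ofFn] at hcard
    omega
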